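/- For integers d ≥ 1 and 1 ≤ u ≤ d+1, the number of connected multigraphs α on vertex set {1,…,n} (self-loops allowed) with exactly d edges, with 1 ∈ V(α), and with exactly u spanned vertices, is at most 2·(e·n)^{u−1}·(3d²)^{d−u+1}. -/

import Mathlib

variable {n : ℕ}

/-- Number of edges of a multigraph (with multiplicity), where the multigraph on `[n]`
is given by edge multiplicities `α : Sym2 (Fin n) → ℕ` (self-loops allowed). -/
def mgEdges (α : Sym2 (Fin n) → ℕ) : ℕ := ∑ e, α e

/-- The set of vertices spanned by the multigraph `α`. -/
def mgVerts (α : Sym2 (Fin n) → ℕ) : Set (Fin n) := {v | ∃ e, α e ≠ 0 ∧ v ∈ e}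

/-- The multigraph `α` is connected: any two spanned vertices are joined by a path of edges. -/
def mgConnected (α : Sym2 (Fin n) → ℕ) : Prop :=
  ∀ u ∈ mgVerts α, ∀ v ∈ mgVerts α,
    Relation.ReflTransGen (fun a b => α s(a, b) ≠ 0) u v

/-- The simple graph underlying a multigraph. -/
def mgGraph (α : Sym2 (Fin n) → ℕ) : SimpleGraph (Fin n) where
  Adj a b := a ≠ b ∧ α s(a, b) ≠ 0
  symm := ⟨fun a b h => ⟨h.1.symm, by rw [Sym2.eq_swap]; exact h.2⟩⟩
  loopless := ⟨fun a h => h.1 rfl⟩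

lemma rtg_reachable (α : Sym2 (Fin n) → ℕ) {x y : Fin n}
    (h : Relation.ReflTransGen (fun a b => α s(a, b) ≠ 0) x y) :
    (mgGraph α).Reachable x y := by
  induction h with
  | refl => exact SimpleGraph.Reachable.refl _
  | @tail b c h₁ hr ih =>
    by_cases hbc : b = c
    · exact hbc ▸ ih
    · exact ih.trans (SimpleGraph.Adj.reachable ⟨hbc, hr⟩)

/-- Decoding a multigraph from (extra vertex set, parent map, leftover edge list). -/
noncomputable def mgDecode (n u k : ℕ) (v0 : Fin n) (S' : Finset (Fin n))
    (phat : Fin (u - 1) → Fin u) (L : Fin k → Sym2 (Fin u)) :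
    Sym2 (Fin n) → ℕ :=
  if h : (((insert v0 S').sort (· ≤ ·)).length = u ∧
      (S'.sort (· ≤ ·)).length = u - 1) then
    fun e =>
      Multiset.count e ((List.ofFn fun i =>
        s((S'.sort (· ≤ ·)).get (Fin.cast h.2.symm i),
          ((insert v0 S').sort (· ≤ ·)).get (Fin.cast h.1.symm (phat i))) : List _)
      : Multiset _)
      + Multiset.count e ((List.ofFn fun i =>
          Sym2.map (fun j => ((insert v0 S').sort (· ≤ ·)).get (Fin.cast h.1.symm j)) (L i)
        : List _) : Multiset _)
  else fun _ => 0

lemma multiset_card_finsum {γ δ : Type*} (s : Finset γ) (f : γ → Multiset δ) :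
    Multiset.card (∑ x ∈ s, f x) = ∑ x ∈ s, Multiset.card (f x) := by
  induction s using Finset.cons_induction with
  | empty => simp
  | cons a s ha ih => simp [Finset.sum_cons, ih]

lemma fact_bound : ∀ w : ℕ, ((w : ℝ) + 1) ^ w ≤ (w.factorial : ℝ) * Real.exp 1 ^ w := by
  intro w
  induction w with
  | zero => simp
  | succ w ih =>
    have hpos : (0:ℝ) < (w:ℝ) + 1 := by positivity
    have h1 : ((w:ℝ) + 2) ≤ ((w:ℝ) + 1) * Real.exp (1 / ((w:ℝ)+1)) := by
      calc ((w:ℝ) + 2) = ((w:ℝ)+1) * (1/((w:ℝ)+1) + 1) := by field_simp; ring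
        _ ≤ ((w:ℝ)+1) * Real.exp (1/((w:ℝ)+1)) := by
            apply mul_le_mul_of_nonneg_left _ (le_of_lt hpos)
            linarith [Real.add_one_le_exp (1 / ((w:ℝ)+1))]
    have h2 : ((w:ℝ) + 2) ^ (w+1) ≤ (((w:ℝ)+1) * Real.exp (1/((w:ℝ)+1))) ^ (w+1) := by
      apply pow_le_pow_left₀ (by positivity) h1
    have h3 : (((w:ℝ)+1) * Real.exp (1/((w:ℝ)+1))) ^ (w+1)
        = ((w:ℝ)+1) ^ (w+1) * Real.exp 1 := by
      rw [mul_pow, ← Real.exp_nat_mul]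
      congr 2
      field_simp
      push_cast; ring
    have h4 : ((w:ℝ)+1) ^ (w+1) = ((w:ℝ)+1) * ((w:ℝ)+1)^w := by ring
    calc (((w+1:ℕ):ℝ) + 1) ^ (w+1) = ((w:ℝ)+2)^(w+1) := by push_cast; ring_nf
      _ ≤ ((w:ℝ)+1) ^ (w+1) * Real.exp 1 := h3 ▸ h2
      _ = (((w:ℝ)+1) * ((w:ℝ)+1)^w) * Real.exp 1 := by rw [h4]
      _ ≤ (((w:ℝ)+1) * ((w.factorial:ℝ) * Real.exp 1 ^ w)) * Real.exp 1 := by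
          apply mul_le_mul_of_nonneg_right _ (le_of_lt (Real.exp_pos 1))
          exact mul_le_mul_of_nonneg_left ih (le_of_lt hpos)
      _ = ((w+1).factorial : ℝ) * Real.exp 1 ^ (w+1) := by
          rw [Nat.factorial_succ]; push_cast; ring

theorem exists_encoding {n : ℕ} (hn : 0 < n) (d u : ℕ) (hu1 : 1 ≤ u) (hu2 : u ≤ d + 1)
    (α : Sym2 (Fin n) → ℕ) (h1 : mgEdges α = d) (h2 : mgConnected α)
    (h3 : (⟨0, hn⟩ : Fin n) ∈ mgVerts α) (h4 : (mgVerts α).ncard = u) :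
    ∃ (S' : Finset (Fin n)) (phat : Fin (u - 1) → Fin u) (L : Fin (d + 1 - u) → Sym2 (Fin u)),
      S'.card = u - 1 ∧ mgDecode n u (d + 1 - u) ⟨0, hn⟩ S' phat L = α := by
  classical
  set v0 : Fin n := ⟨0, hn⟩ with hv0def
  have hVfin : (mgVerts α).Finite := Set.toFinite _
  set S : Finset (Fin n) := hVfin.toFinset with hSdef
  have hmemS : ∀ x, x ∈ S ↔ x ∈ mgVerts α := fun x => Set.Finite.mem_toFinset _
  have hScard : S.card = u := by rw [← h4, Set.ncard_eq_toFinset_card _ hVfin]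
  have hv0S : v0 ∈ S := (hmemS v0).2 h3
  have hSerase : insert v0 (S.erase v0) = S := Finset.insert_erase hv0S
  have hS'card : (S.erase v0).card = u - 1 := by rw [Finset.card_erase_of_mem hv0S, hScard]
  -- reachability
  have hreach : ∀ v ∈ S, (mgGraph α).Reachable v v0 :=
    fun v hv => rtg_reachable α (h2 v ((hmemS v).1 hv) v0 h3)
  -- parent function via shortest walks
  have hpar : ∀ v : Fin n, ∃ w : Fin n, v ∈ S.erase v0 →
      α s(v, w) ≠ 0 ∧ w ∈ S ∧ (mgGraph α).dist w v0 < (mgGraph α).dist v v0 := by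
    intro v
    by_cases hv : v ∈ S.erase v0
    · obtain ⟨hvne, hvS⟩ := Finset.mem_erase.1 hv
      obtain ⟨pw, hpw⟩ := (hreach v hvS).exists_walk_length_eq_dist
      cases pw with
      | nil => exact absurd rfl hvne
      | cons hadj q =>
        rename_i w
        refine ⟨w, fun _ => ⟨hadj.2, ?_, ?_⟩⟩
        · exact (hmemS w).2 ⟨s(v, w), hadj.2, Sym2.mem_mk_right v w⟩
        · have hq := SimpleGraph.dist_le q
          have hlen : q.length + 1 = (mgGraph α).dist v v0 := by simpa using hpw
          omega
    · exact ⟨v0, fun hc => absurd hc hv⟩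
  obtain ⟨p, hp⟩ := Classical.axiomOfChoice hpar
  -- sorted lists and labelings
  set lst : List (Fin n) := (insert v0 (S.erase v0)).sort (· ≤ ·) with hlstdef
  set lst' : List (Fin n) := (S.erase v0).sort (· ≤ ·) with hlst'def
  have hlst : lst.length = u := by rw [hlstdef, hSerase, Finset.length_sort, hScard]
  have hlst' : lst'.length = u - 1 := by rw [hlst'def, Finset.length_sort, hS'card]
  set ι : Fin u → Fin n := fun i => lst.get (Fin.cast hlst.symm i) with hιdef
  set ι' : Fin (u - 1) → Fin n := fun i => lst'.get (Fin.cast hlst'.symm i) with hι'def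
  have hιmem : ∀ i, ι i ∈ S := by
    intro i
    rw [hιdef, ← hSerase]
    exact (Finset.mem_sort _).1 (List.get_mem _ _)
  have hι'mem : ∀ i, ι' i ∈ S.erase v0 := by
    intro i
    rw [hι'def]
    exact (Finset.mem_sort _).1 (List.get_mem _ _)
  have hιinj : Function.Injective ι := by
    intro i j hij
    have hnd : lst.Nodup := Finset.sort_nodup _ _
    have h := (List.Nodup.get_inj_iff hnd).1 hij
    simpa [Fin.ext_iff] using h
  have hι'inj : Function.Injective ι' := by
    intro i j hij
    have hnd : lst'.Nodup := Finset.sort_nodup _ _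
    have h := (List.Nodup.get_inj_iff hnd).1 hij
    simpa [Fin.ext_iff] using h
  set idx : Fin n → Fin u := fun x =>
    if h : List.idxOf x lst < u then ⟨_, h⟩ else ⟨0, hu1⟩ with hidxdef
  have hιidx : ∀ x ∈ S, ι (idx x) = x := by
    intro x hx
    have hxl : x ∈ lst := by
      rw [hlstdef]
      exact (Finset.mem_sort _).2 (by rw [hSerase]; exact hx)
    have hlt : List.idxOf x lst < u := by
      rw [← hlst]; exact List.idxOf_lt_length_iff.2 hxl
    simp only [hidxdef, dif_pos hlt, hιdef]
    simp [List.get_eq_getElem, List.getElem_idxOf]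
  -- tree edges
  set Te : Multiset (Sym2 (Fin n)) :=
    ((List.ofFn fun i => s(ι' i, p (ι' i)) : List (Sym2 (Fin n))) : Multiset (Sym2 (Fin n)))
    with hTedef
  have hTenodup : (List.ofFn fun i => s(ι' i, p (ι' i))).Nodup := by
    rw [List.nodup_ofFn]
    intro i j hij
    obtain ⟨hαi, hSi, hdi⟩ := hp (ι' i) (hι'mem i)
    obtain ⟨hαj, hSj, hdj⟩ := hp (ι' j) (hι'mem j)
    rcases Sym2.eq_iff.1 hij with ⟨ha, hb⟩ | ⟨ha, hb⟩
    · exact hι'inj ha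
    · rw [← ha] at hdj
      rw [hb] at hdi
      omega
  have hTecount_le_one : ∀ e, Te.count e ≤ 1 := by
    intro e
    exact Multiset.nodup_iff_count_le_one.1 (Multiset.coe_nodup.2 hTenodup) e
  have hTepos : ∀ e ∈ Te, α e ≠ 0 := by
    intro e he
    rw [hTedef, Multiset.mem_coe, List.mem_ofFn] at he
    obtain ⟨i, hi⟩ := he
    rw [← hi]
    exact (hp (ι' i) (hι'mem i)).1
  have hTele : ∀ e, Te.count e ≤ α e := by
    intro e
    by_cases he : e ∈ Te
    · exact le_trans (hTecount_le_one e) (Nat.one_le_iff_ne_zero.2 (hTepos e he))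
    · rw [Multiset.count_eq_zero_of_notMem he]; exact Nat.zero_le _
  have hTecard : Multiset.card Te = u - 1 := by
    rw [hTedef]; simp
  -- leftover multiplicities
  set β : Sym2 (Fin n) → ℕ := fun e => α e - Te.count e with hβdef
  have hrecon : ∀ e, β e + Te.count e = α e := fun e => Nat.sub_add_cancel (hTele e)
  set ρ : Sym2 (Fin u) → Sym2 (Fin n) := Sym2.map ι with hρdef
  have hρinj : Function.Injective ρ := Sym2.map.injective hιinj
  have hsupp : ∀ e, α e ≠ 0 → ∃ e₀, ρ e₀ = e := by
    intro e he
    induction e using Sym2.ind with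
    | _ a b =>
      have haS : a ∈ S := (hmemS a).2 ⟨s(a,b), he, Sym2.mem_mk_left a b⟩
      have hbS : b ∈ S := (hmemS b).2 ⟨s(a,b), he, Sym2.mem_mk_right a b⟩
      refine ⟨s(idx a, idx b), ?_⟩
      rw [hρdef, Sym2.map_pair_eq, hιidx a haS, hιidx b hbS]
  have hβsupp : ∀ e, (¬ ∃ e₀, ρ e₀ = e) → β e = 0 := by
    intro e he
    have hα0 : α e = 0 := by
      by_contra hc; exact he (hsupp e hc)
    rw [hβdef]
    simp [hα0]
  -- the multiset of leftover edges, relabeled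
  set Mβ : Multiset (Sym2 (Fin u)) := ∑ e₀ : Sym2 (Fin u), Multiset.replicate (β (ρ e₀)) e₀
    with hMβdef
  have hMβcount : ∀ e₀, Mβ.count e₀ = β (ρ e₀) := by
    intro e₀
    rw [hMβdef, Multiset.count_sum']
    rw [Finset.sum_eq_single e₀]
    · rw [Multiset.count_replicate_self]
    · intro b _ hb; rw [Multiset.count_replicate, if_neg hb]
    · intro h; exact absurd (Finset.mem_univ _) h
  have hsum_count : ∑ e : Sym2 (Fin n), Te.count e = u - 1 := by
    rw [← hTecard, ← Multiset.toFinset_sum_count_eq Te]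
    refine (Finset.sum_subset (Finset.subset_univ _) ?_).symm
    intro x _ hx
    exact Multiset.count_eq_zero_of_notMem (by simpa using hx)
  have hβsum : ∑ e : Sym2 (Fin n), β e = d + 1 - u := by
    have hsum : (∑ e : Sym2 (Fin n), β e) + (u - 1) = d := by
      rw [← hsum_count, ← Finset.sum_add_distrib, ← h1]
      exact Finset.sum_congr rfl fun e _ => hrecon e
    omega
  have hMβcard : Multiset.card Mβ = d + 1 - u := by
    rw [hMβdef]
    rw [multiset_card_finsum]
    have h5 : ∑ e₀ : Sym2 (Fin u), Multiset.card (Multiset.replicate (β (ρ e₀)) e₀)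
        = ∑ e₀ : Sym2 (Fin u), β (ρ e₀) := by
      simp [Multiset.card_replicate]
    rw [h5]
    have himg : ∑ e₀ : Sym2 (Fin u), β (ρ e₀) = ∑ e ∈ Finset.univ.image ρ, β e :=
      (Finset.sum_image (fun x _ y _ h => hρinj h)).symm
    have hext : ∑ e ∈ Finset.univ.image ρ, β e = ∑ e : Sym2 (Fin n), β e := by
      refine Finset.sum_subset (Finset.subset_univ _) ?_
      intro x _ hx
      refine hβsupp x ?_
      rintro ⟨e₀, he₀⟩
      exact hx (Finset.mem_image.2 ⟨e₀, Finset.mem_univ _, he₀⟩)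
    rw [himg, hext, hβsum]
  -- the leftover list
  have htl : d + 1 - u = Mβ.toList.length := by rw [Multiset.length_toList, hMβcard]
  set L : Fin (d + 1 - u) → Sym2 (Fin u) := fun i => Mβ.toList.get (Fin.cast htl i) with hLdef
  have hofFnL : List.ofFn L = Mβ.toList := by
    refine List.ext_get ?_ ?_
    · simp [← htl]
    · intro i hi1 hi2
      simp [hLdef]
  set phat : Fin (u - 1) → Fin u := fun i => idx (p (ι' i)) with hphatdef
  refine ⟨S.erase v0, phat, L, hS'card, ?_⟩
  rw [mgDecode]
  rw [dif_pos (⟨hlst, hlst'⟩ : (((insert v0 (S.erase v0)).sort (· ≤ ·)).length = u ∧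
      ((S.erase v0).sort (· ≤ ·)).length = u - 1))]
  funext e
  show Multiset.count e ((List.ofFn fun i => s(ι' i, ι (phat i))) : Multiset _)
      + Multiset.count e ((List.ofFn fun i => Sym2.map ι (L i)) : Multiset _) = α e
  have hTee : (List.ofFn fun i => s(ι' i, ι (phat i))) = (List.ofFn fun i => s(ι' i, p (ι' i))) := by
    refine congrArg _ ?_
    funext i
    rw [hphatdef]
    rw [hιidx _ (hp (ι' i) (hι'mem i)).2.1]
  have hLee : ((List.ofFn fun i => Sym2.map ι (L i)) : Multiset (Sym2 (Fin n)))
      = Mβ.map ρ := by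
    have h6 : (List.ofFn fun i => Sym2.map ι (L i)) = (List.ofFn L).map ρ := by
      rw [List.map_ofFn]; rfl
    rw [h6, hofFnL]
    rw [← Multiset.map_coe, Multiset.coe_toList]
  rw [hTee, hLee]
  have hLcount : (Mβ.map ρ).count e = β e := by
    by_cases he : ∃ e₀, ρ e₀ = e
    · obtain ⟨e₀, he₀⟩ := he
      rw [← he₀, Multiset.count_map_eq_count' ρ _ hρinj, hMβcount]
    · rw [Multiset.count_eq_zero_of_notMem, hβsupp e he]
      intro hc
      obtain ⟨e₀, _, he₀⟩ := Multiset.mem_map.1 hc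
      exact he ⟨e₀, he₀⟩
  rw [hLcount]
  have := hrecon e
  rw [hTedef] at this
  omega

/-- **Lemma E.2 (refined count of connected multigraphs).** For `d ≥ 1` and `1 ≤ u ≤ d+1`,
the number of connected multigraphs on `[n]` with `d` edges, spanning vertex `1`, and
spanning exactly `u` vertices, is at most `2·(e·n)^{u−1}·(3d²)^{d−u+1}`. -/
theorem count_connected_multigraphs_refined {n : ℕ} (hn : 0 < n) (d u : ℕ) (hd : 1 ≤ d)
    (hu1 : 1 ≤ u) (hu2 : u ≤ d + 1) :
    ((Set.ncard {α : Sym2 (Fin n) → ℕ |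
        mgEdges α = d ∧ mgConnected α ∧ (⟨0, hn⟩ : Fin n) ∈ mgVerts α ∧
        (mgVerts α).ncard = u} : ℕ) : ℝ)
      ≤ 2 * (Real.exp 1 * n) ^ (u - 1) * (3 * (d : ℝ) ^ 2) ^ (d - u + 1) := by
  classical
  set A := {α : Sym2 (Fin n) → ℕ |
      mgEdges α = d ∧ mgConnected α ∧ (⟨0, hn⟩ : Fin n) ∈ mgVerts α ∧
      (mgVerts α).ncard = u} with hA
  set T := ({s : Finset (Fin n) // s.card = u - 1} × (Fin (u - 1) → Fin u) ×
      (Fin (d + 1 - u) → Sym2 (Fin u))) with hT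
  set D : T → (Sym2 (Fin n) → ℕ) :=
    fun t => mgDecode n u (d + 1 - u) ⟨0, hn⟩ t.1.1 t.2.1 t.2.2 with hD
  have hsub : A ⊆ Set.range D := by
    rintro α ⟨ha1, ha2, ha3, ha4⟩
    obtain ⟨S', phat, L, hcard, hdec⟩ := exists_encoding hn d u hu1 hu2 α ha1 ha2 ha3 ha4
    exact ⟨⟨⟨S', hcard⟩, phat, L⟩, hdec⟩
  -- cardinality bound
  have hcardT : Nat.card T =
      n.choose (u - 1) * u ^ (u - 1) * (Fintype.card (Sym2 (Fin u))) ^ (d + 1 - u) := by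
    simp [hT, Nat.card_eq_fintype_card, Fintype.card_fun, mul_assoc]
  have hncard : A.ncard ≤ Nat.card T := by
    calc A.ncard ≤ (Set.range D).ncard :=
          Set.ncard_le_ncard hsub (Set.finite_range D)
      _ = (D '' Set.univ).ncard := by rw [Set.image_univ]
      _ ≤ (Set.univ : Set T).ncard := Set.ncard_image_le Set.finite_univ
      _ = Nat.card T := Set.ncard_univ T
  have hw : u - 1 + 1 = u := by omega
  have hm : Fintype.card (Sym2 (Fin u)) ≤ 3 * d ^ 2 := by
    have hc : Fintype.card (Sym2 (Fin u)) = (u + 1) * u / 2 := by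
      rw [Sym2.card, Fintype.card_fin, Nat.choose_two_right]
      simp
    rw [hc]
    have h6 : (u + 1) * u ≤ 6 * d ^ 2 := by nlinarith
    calc (u + 1) * u / 2 ≤ 6 * d ^ 2 / 2 := Nat.div_le_div_right h6
      _ = 3 * d ^ 2 := by omega
  have hx1 : ((n.choose (u-1) : ℕ) : ℝ) * (u:ℝ)^(u-1) ≤ (Real.exp 1 * n)^(u-1) := by
    have hc := Nat.choose_le_pow_div (α := ℝ) (u-1) n
    have hf := fact_bound (u-1)
    have hu' : ((u:ℝ)) = ((u-1:ℕ):ℝ) + 1 := by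
      have h' : ((u - 1 + 1 : ℕ) : ℝ) = ((u-1:ℕ):ℝ) + 1 := by push_cast; ring
      rw [hw] at h'; exact h'
    calc (n.choose (u-1) : ℝ) * (u:ℝ)^(u-1)
        ≤ ((n:ℝ)^(u-1) / (u-1).factorial) * ((((u-1:ℕ):ℝ)+1)^(u-1)) := by
          rw [← hu']; exact mul_le_mul_of_nonneg_right hc (by positivity)
      _ ≤ ((n:ℝ)^(u-1) / (u-1).factorial) * (((u-1).factorial : ℝ) * Real.exp 1 ^ (u-1)) := by
          apply mul_le_mul_of_nonneg_left hf (by positivity)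
      _ = (Real.exp 1 * n)^(u-1) := by
          have hfne : ((u-1).factorial : ℝ) ≠ 0 := by positivity
          rw [mul_pow]
          calc ((n:ℝ)^(u-1) / ((u-1).factorial : ℝ)) * (((u-1).factorial : ℝ) * Real.exp 1 ^ (u-1))
              = (((u-1).factorial : ℝ) / ((u-1).factorial : ℝ)) * ((n:ℝ)^(u-1) * Real.exp 1 ^ (u-1)) := by
                ring
            _ = Real.exp 1 ^ (u-1) * (n:ℝ)^(u-1) := by rw [div_self hfne]; ring
  have hx2 : ((Fintype.card (Sym2 (Fin u)) : ℕ) : ℝ) ^ (d+1-u) ≤ (3 * (d:ℝ)^2) ^ (d-u+1) := by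
    have h3d : (1:ℝ) ≤ 3 * (d:ℝ)^2 := by
      have hd' : (1:ℝ) ≤ (d:ℝ) := by exact_mod_cast hd
      nlinarith
    have hmle : ((Fintype.card (Sym2 (Fin u)) : ℕ) : ℝ) ≤ 3 * (d:ℝ)^2 := by
      calc ((Fintype.card (Sym2 (Fin u)) : ℕ) : ℝ) ≤ ((3 * d^2 : ℕ) : ℝ) := by exact_mod_cast hm
        _ = 3 * (d:ℝ)^2 := by push_cast; ring
    calc ((Fintype.card (Sym2 (Fin u)) : ℕ) : ℝ) ^ (d+1-u)
        ≤ (3 * (d:ℝ)^2) ^ (d+1-u) := pow_le_pow_left₀ (by positivity) hmle _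
      _ ≤ (3 * (d:ℝ)^2) ^ (d-u+1) := pow_le_pow_right₀ h3d (by omega)
  calc (A.ncard : ℝ) ≤ (Nat.card T : ℝ) := by exact_mod_cast hncard
    _ = (n.choose (u-1) : ℝ) * (u:ℝ)^(u-1) * ((Fintype.card (Sym2 (Fin u)) : ℝ)) ^ (d+1-u) := by
        rw [hcardT]; push_cast; ring
    _ ≤ (Real.exp 1 * n)^(u-1) * (3*(d:ℝ)^2)^(d-u+1) :=
        mul_le_mul hx1 hx2 (by positivity) (by positivity)
    _ ≤ 2 * (Real.exp 1 * n)^(u-1) * (3*(d:ℝ)^2)^(d-u+1) := by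
        nlinarith [pow_nonneg (by positivity : (0:ℝ) ≤ Real.exp 1 * n) (u-1),
          pow_nonneg (by positivity : (0:ℝ) ≤ 3*(d:ℝ)^2) (d-u+1)]
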